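/- Let G = (V,E) be a graph and k a rational with χ*(G) ≤ |V|. Define a partial function on ground set V with value 1 on each singleton {v}, value 2 on each edge {i,j} ∈ E, and value k on the full set V. Then this partial function is extendible to a coverage function if and only if χ*(G) ≤ k. -/

import Mathlib

open Finset

/-- `f` is a coverage function. -/
def IsCoverage (m : ℕ) (f : Finset (Fin m) → ℝ) : Prop :=
  ∃ (k : ℕ) (wt : Fin k → ℝ) (A : Fin m → Finset (Fin k)),
    (∀ u, 0 ≤ wt u) ∧ ∀ T : Finset (Fin m), f T = ∑ u ∈ T.biUnion A, wt u

/-- `I` is an independent set of `G`. -/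
def IsIndep {N : ℕ} (G : SimpleGraph (Fin N)) (I : Finset (Fin N)) : Prop :=
  ∀ i ∈ I, ∀ j ∈ I, ¬ G.Adj i j

/-- The fractional chromatic number of `G`. -/
noncomputable def fracChrom (N : ℕ) (G : SimpleGraph (Fin N)) : ℝ :=
  sInf { c : ℝ | ∃ x : Finset (Fin N) → ℝ,
    (∀ I, 0 ≤ x I ∧ x I ≤ 1) ∧
    (∀ I, ¬ IsIndep G I → x I = 0) ∧
    (∀ v : Fin N, 1 ≤ ∑ I ∈ Finset.univ.filter (fun I : Finset (Fin N) => v ∈ I), x I) ∧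
    c = ∑ I : Finset (Fin N), x I }

section Aux1
variable {N : ℕ}

lemma indep_mono {G : SimpleGraph (Fin N)} {I J : Finset (Fin N)} (h : I ⊆ J)
    (hJ : IsIndep G J) : IsIndep G I := fun i hi j hj => hJ i (h hi) j (h hj)

lemma indep_card_one {G : SimpleGraph (Fin N)} {I : Finset (Fin N)} (h : I.card = 1) :
    IsIndep G I := by
  obtain ⟨a, rfl⟩ := Finset.card_eq_one.mp h
  intro i hi j hj
  simp only [mem_singleton] at hi hj
  subst hi; subst hj; exact G.irrefl

noncomputable def fOf (w : Finset (Fin N) → ℝ) : Finset (Fin N) → ℝ :=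
  fun T => ∑ I ∈ Finset.univ.filter (fun I : Finset (Fin N) => (I ∩ T).Nonempty), w I

lemma isCoverage_fOf (w : Finset (Fin N) → ℝ) (hw : ∀ I, 0 ≤ w I) :
    IsCoverage N (fOf w) := by
  classical
  set e := Fintype.equivFin (Finset (Fin N)) with he
  refine ⟨Fintype.card (Finset (Fin N)), fun u => w (e.symm u),
    fun t => Finset.univ.filter (fun u => t ∈ e.symm u), fun u => hw _, ?_⟩
  intro T
  have hbi : T.biUnion (fun t => Finset.univ.filter (fun u => t ∈ e.symm u))
      = Finset.univ.filter (fun u => ((e.symm u) ∩ T).Nonempty) := by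
    ext u
    simp only [Finset.mem_biUnion, Finset.mem_filter, Finset.mem_univ, true_and,
      Finset.Nonempty, Finset.mem_inter]
    tauto
  rw [hbi, fOf, Finset.sum_filter, Finset.sum_filter]
  exact (Fintype.sum_equiv e.symm _ _ (fun u => rfl)).symm

end Aux1

section Aux2
variable {N : ℕ}
lemma filter_inter_singleton (v : Fin N) :
    Finset.univ.filter (fun I : Finset (Fin N) => (I ∩ {v}).Nonempty)
      = Finset.univ.filter (fun I : Finset (Fin N) => v ∈ I) := by
  ext I
  simp only [Finset.mem_filter, Finset.mem_univ, true_and, Finset.Nonempty,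
    Finset.mem_inter, Finset.mem_singleton]
  constructor
  · rintro ⟨x, hxI, rfl⟩; exact hxI
  · intro h; exact ⟨v, h, rfl⟩

lemma fOf_singleton (w : Finset (Fin N) → ℝ) (v : Fin N) :
    fOf w {v} = ∑ I ∈ Finset.univ.filter (fun I : Finset (Fin N) => v ∈ I), w I := by
  rw [fOf, filter_inter_singleton]

lemma fOf_univ (w : Finset (Fin N) → ℝ) :
    fOf w Finset.univ = ∑ I ∈ Finset.univ.filter (fun I : Finset (Fin N) => I ≠ ∅), w I := by
  rw [fOf]
  congr 1
  ext I
  simp [Finset.nonempty_iff_ne_empty]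

lemma fOf_pair (w : Finset (Fin N) → ℝ) {G : SimpleGraph (Fin N)}
    (hInd : ∀ I, ¬ IsIndep G I → w I = 0) {i j : Fin N} (hij : G.Adj i j) :
    fOf w {i, j} = (∑ I ∈ Finset.univ.filter (fun I : Finset (Fin N) => i ∈ I), w I)
      + ∑ I ∈ Finset.univ.filter (fun I : Finset (Fin N) => j ∈ I), w I := by
  classical
  have hun : Finset.univ.filter (fun I : Finset (Fin N) => (I ∩ {i, j}).Nonempty)
      = Finset.univ.filter (fun I : Finset (Fin N) => i ∈ I)
        ∪ Finset.univ.filter (fun I : Finset (Fin N) => j ∈ I) := by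
    ext I
    simp only [Finset.mem_filter, Finset.mem_univ, true_and, Finset.Nonempty,
      Finset.mem_inter, Finset.mem_union, Finset.mem_insert, Finset.mem_singleton]
    constructor
    · rintro ⟨x, hxI, rfl | rfl⟩
      · exact Or.inl hxI
      · exact Or.inr hxI
    · rintro (h | h)
      · exact ⟨i, h, Or.inl rfl⟩
      · exact ⟨j, h, Or.inr rfl⟩
  have hzero : ∑ I ∈ (Finset.univ.filter (fun I : Finset (Fin N) => i ∈ I)
      ∩ Finset.univ.filter (fun I : Finset (Fin N) => j ∈ I)), w I = 0 := by
    apply Finset.sum_eq_zero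
    intro I hI
    simp only [Finset.mem_inter, Finset.mem_filter, Finset.mem_univ, true_and] at hI
    exact hInd I (fun h => h i hI.1 j hI.2 hij)
  have h2 := Finset.sum_union_inter (s₁ := Finset.univ.filter (fun I : Finset (Fin N) => i ∈ I))
    (s₂ := Finset.univ.filter (fun I : Finset (Fin N) => j ∈ I)) (f := w)
  rw [hzero, add_zero] at h2
  rw [fOf]
  rw [hun]
  exact h2
end Aux2

section Aux3
variable {N : ℕ}
set_option maxHeartbeats 2000000 in
lemma equalize (G : SimpleGraph (Fin N)) (F : Finset (Fin N)) :
    ∀ x : Finset (Fin N) → ℝ, (∀ I, 0 ≤ x I) → (∀ I, ¬ IsIndep G I → x I = 0) →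
      (∀ v, 1 ≤ ∑ I ∈ Finset.univ.filter (fun I : Finset (Fin N) => v ∈ I), x I) →
    ∃ y : Finset (Fin N) → ℝ, (∀ I, 0 ≤ y I) ∧ (∀ I, ¬ IsIndep G I → y I = 0) ∧
      (∀ v, 1 ≤ ∑ I ∈ Finset.univ.filter (fun I : Finset (Fin N) => v ∈ I), y I) ∧
      (∀ v ∈ F, ∑ I ∈ Finset.univ.filter (fun I : Finset (Fin N) => v ∈ I), y I = 1) ∧
      (∑ I ∈ Finset.univ.filter (fun I : Finset (Fin N) => I ≠ ∅), y I
        ≤ ∑ I ∈ Finset.univ.filter (fun I : Finset (Fin N) => I ≠ ∅), x I) := by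
  induction F using Finset.induction_on with
  | empty =>
    intro x hx0 hxI hx1
    exact ⟨x, hx0, hxI, hx1, by simp, le_refl _⟩
  | @insert a F ha ih =>
    intro x hx0 hxI hx1
    obtain ⟨y, hy0, hyI, hy1, hyF, hyT⟩ := ih x hx0 hxI hx1
    set s := ∑ I ∈ Finset.univ.filter (fun I : Finset (Fin N) => a ∈ I), y I with hs
    have hs1 : (1:ℝ) ≤ s := hy1 a
    have hs0 : (0:ℝ) < s := lt_of_lt_of_le zero_lt_one hs1
    have hc0 : (0:ℝ) ≤ 1 - 1/s := by
      have h1 : 1/s ≤ 1 := by rw [div_le_one hs0]; exact hs1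
      linarith
    set y' : Finset (Fin N) → ℝ :=
      fun I => if a ∈ I then y I / s else y I + (1 - 1/s) * y (insert a I) with hy'
    have key : ∀ (p : Finset (Fin N) → Prop) (_ : DecidablePred p),
        ∑ I ∈ Finset.univ.filter p, y' I =
          (∑ I ∈ (Finset.univ.filter p).filter (fun I => a ∈ I), y I) / s
          + (∑ I ∈ (Finset.univ.filter p).filter (fun I => a ∉ I), y I)
          + (1 - 1/s) * ∑ I ∈ (Finset.univ.filter p).filter (fun I => a ∉ I), y (insert a I) := by
      intro p hp
      rw [← Finset.sum_filter_add_sum_filter_not (Finset.univ.filter p) (fun I => a ∈ I) y']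
      have e1 : ∑ I ∈ (Finset.univ.filter p).filter (fun I => a ∈ I), y' I
          = (∑ I ∈ (Finset.univ.filter p).filter (fun I => a ∈ I), y I) / s := by
        rw [Finset.sum_div]
        apply Finset.sum_congr rfl
        intro I hI
        rw [Finset.mem_filter] at hI
        simp only [hy', if_pos hI.2]
      have e2 : ∑ I ∈ (Finset.univ.filter p).filter (fun I => a ∉ I), y' I
          = (∑ I ∈ (Finset.univ.filter p).filter (fun I => a ∉ I), y I)
            + (1 - 1/s) * ∑ I ∈ (Finset.univ.filter p).filter (fun I => a ∉ I), y (insert a I) := by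
        rw [Finset.mul_sum, ← Finset.sum_add_distrib]
        apply Finset.sum_congr rfl
        intro I hI
        rw [Finset.mem_filter] at hI
        simp only [hy', if_neg hI.2]
      rw [e1, e2]; ring
    have bij : ∀ u, u ≠ a →
        ∑ I ∈ (Finset.univ.filter (fun I : Finset (Fin N) => u ∈ I)).filter (fun I => a ∉ I),
            y (insert a I)
        = ∑ I ∈ (Finset.univ.filter (fun I : Finset (Fin N) => u ∈ I)).filter (fun I => a ∈ I),
            y I := by
      intro u hu
      refine Finset.sum_nbij' (fun I => insert a I) (fun J => J.erase a) ?_ ?_ ?_ ?_ ?_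
      · intro I hI
        simp only [Finset.mem_filter, Finset.mem_univ, true_and] at hI ⊢
        exact ⟨Finset.mem_insert_of_mem hI.1, Finset.mem_insert_self a I⟩
      · intro J hJ
        simp only [Finset.mem_filter, Finset.mem_univ, true_and] at hJ ⊢
        exact ⟨Finset.mem_erase.mpr ⟨hu, hJ.1⟩, Finset.notMem_erase a J⟩
      · intro I hI
        simp only [Finset.mem_filter] at hI
        exact Finset.erase_insert hI.2
      · intro J hJ
        simp only [Finset.mem_filter] at hJ
        exact Finset.insert_erase hJ.2
      · intro I _
        rfl
    have hSv_eq : ∀ u, u ≠ a →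
        ∑ I ∈ Finset.univ.filter (fun I : Finset (Fin N) => u ∈ I), y' I
        = ∑ I ∈ Finset.univ.filter (fun I : Finset (Fin N) => u ∈ I), y I := by
      intro u hu
      calc ∑ I ∈ Finset.univ.filter (fun I : Finset (Fin N) => u ∈ I), y' I
          = (∑ I ∈ (Finset.univ.filter (fun I : Finset (Fin N) => u ∈ I)).filter
                (fun I => a ∈ I), y I) / s
            + (∑ I ∈ (Finset.univ.filter (fun I : Finset (Fin N) => u ∈ I)).filter
                (fun I => a ∉ I), y I)
            + (1 - 1/s) * ∑ I ∈ (Finset.univ.filter (fun I : Finset (Fin N) => u ∈ I)).filter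
                (fun I => a ∉ I), y (insert a I) := key (fun I => u ∈ I) (by infer_instance)
        _ = (∑ I ∈ (Finset.univ.filter (fun I : Finset (Fin N) => u ∈ I)).filter
                (fun I => a ∈ I), y I) / s
            + (∑ I ∈ (Finset.univ.filter (fun I : Finset (Fin N) => u ∈ I)).filter
                (fun I => a ∉ I), y I)
            + (1 - 1/s) * ∑ I ∈ (Finset.univ.filter (fun I : Finset (Fin N) => u ∈ I)).filter
                (fun I => a ∈ I), y I := by rw [bij u hu]
        _ = (∑ I ∈ (Finset.univ.filter (fun I : Finset (Fin N) => u ∈ I)).filter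
                (fun I => a ∈ I), y I)
            + (∑ I ∈ (Finset.univ.filter (fun I : Finset (Fin N) => u ∈ I)).filter
                (fun I => a ∉ I), y I) := by
              have hsne : s ≠ 0 := ne_of_gt hs0
              field_simp
              ring
        _ = ∑ I ∈ Finset.univ.filter (fun I : Finset (Fin N) => u ∈ I), y I :=
              Finset.sum_filter_add_sum_filter_not _ _ _
    have hSv_a : ∑ I ∈ Finset.univ.filter (fun I : Finset (Fin N) => a ∈ I), y' I = 1 := by
      have e : ∀ I ∈ Finset.univ.filter (fun I : Finset (Fin N) => a ∈ I), y' I = y I / s := by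
        intro I hI
        rw [Finset.mem_filter] at hI
        simp only [hy', if_pos hI.2]
      rw [Finset.sum_congr rfl e, ← Finset.sum_div, ← hs, div_self (ne_of_gt hs0)]
    have hTne : ∑ I ∈ Finset.univ.filter (fun I : Finset (Fin N) => I ≠ ∅), y' I
        ≤ ∑ I ∈ Finset.univ.filter (fun I : Finset (Fin N) => I ≠ ∅), y I := by
      have hkey := key (fun I : Finset (Fin N) => I ≠ ∅) (by infer_instance)
      have hE : ∑ I ∈ (Finset.univ.filter (fun I : Finset (Fin N) => I ≠ ∅)).filter
            (fun I => a ∉ I), y (insert a I)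
          ≤ ∑ I ∈ (Finset.univ.filter (fun I : Finset (Fin N) => I ≠ ∅)).filter
            (fun I => a ∈ I), y I := by
        have hinj : ∀ I ∈ (Finset.univ.filter (fun I : Finset (Fin N) => I ≠ ∅)).filter
            (fun I => a ∉ I), ∀ J ∈ (Finset.univ.filter (fun I : Finset (Fin N) => I ≠ ∅)).filter
            (fun I => a ∉ I), insert a I = insert a J → I = J := by
          intro I hI J hJ hIJ
          simp only [Finset.mem_filter] at hI hJ
          have h2 := congrArg (fun S => Finset.erase S a) hIJ
          simpa [Finset.erase_insert hI.2, Finset.erase_insert hJ.2] using h2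
        rw [← Finset.sum_image hinj]
        apply Finset.sum_le_sum_of_subset_of_nonneg
        · intro J hJ
          simp only [Finset.mem_image, Finset.mem_filter, Finset.mem_univ, true_and] at hJ ⊢
          obtain ⟨I, ⟨hIne, haI⟩, rfl⟩ := hJ
          refine ⟨?_, Finset.mem_insert_self a I⟩
          exact Finset.ne_empty_of_mem (Finset.mem_insert_self a I)
        · intro J _ _
          exact hy0 J
      have base := Finset.sum_filter_add_sum_filter_not
        (Finset.univ.filter (fun I : Finset (Fin N) => I ≠ ∅)) (fun I => a ∈ I) y
      set C := ∑ I ∈ (Finset.univ.filter (fun I : Finset (Fin N) => I ≠ ∅)).filter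
        (fun I => a ∈ I), y I with hC
      set D := ∑ I ∈ (Finset.univ.filter (fun I : Finset (Fin N) => I ≠ ∅)).filter
        (fun I => a ∉ I), y I with hD
      set E := ∑ I ∈ (Finset.univ.filter (fun I : Finset (Fin N) => I ≠ ∅)).filter
        (fun I => a ∉ I), y (insert a I) with hE2
      have hid : C/s + (1 - 1/s) * C = C := by
        have hsne : s ≠ 0 := ne_of_gt hs0
        field_simp
        ring
      have hmul : (1 - 1/s) * E ≤ (1 - 1/s) * C := mul_le_mul_of_nonneg_left hE hc0
      have hkey' : ∑ I ∈ Finset.univ.filter (fun I : Finset (Fin N) => I ≠ ∅), y' I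
          = C/s + D + (1 - 1/s) * E := hkey
      rw [hkey']
      linarith
    refine ⟨y', ?_, ?_, ?_, ?_, hTne.trans hyT⟩
    · intro I
      simp only [hy']
      split
      · exact div_nonneg (hy0 I) hs0.le
      · exact add_nonneg (hy0 I) (mul_nonneg hc0 (hy0 _))
    · intro I hI
      have h1 : y I = 0 := hyI I hI
      have h2 : y (insert a I) = 0 :=
        hyI _ (fun h => hI (indep_mono (Finset.subset_insert a I) h))
      simp only [hy']
      split <;> simp [h1, h2]
    · intro u
      by_cases hu : u = a
      · subst hu
        rw [hSv_a]
      · rw [hSv_eq u hu]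
        exact hy1 u
    · intro v hv
      rcases Finset.mem_insert.mp hv with rfl | hvF
      · exact hSv_a
      · have hva : v ≠ a := fun h => ha (h ▸ hvF)
        rw [hSv_eq v hva]
        exact hyF v hvF
end Aux3

section Aux4
variable {N : ℕ}

noncomputable def zsol (N : ℕ) : Finset (Fin N) → ℝ := fun I => if I.card = 1 then 1 else 0

lemma zsol_nonneg (I : Finset (Fin N)) : 0 ≤ zsol N I := by
  simp only [zsol]; split <;> norm_num

lemma zsol_le_one (I : Finset (Fin N)) : zsol N I ≤ 1 := by
  simp only [zsol]; split <;> norm_num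

lemma zsol_indep {G : SimpleGraph (Fin N)} (I : Finset (Fin N)) (h : ¬ IsIndep G I) :
    zsol N I = 0 := by
  simp only [zsol]
  split
  · exact absurd (indep_card_one (by assumption)) h
  · rfl

lemma zsol_cover (v : Fin N) :
    ∑ I ∈ Finset.univ.filter (fun I : Finset (Fin N) => v ∈ I), zsol N I = 1 := by
  rw [Finset.sum_eq_single_of_mem ({v} : Finset (Fin N))
    (Finset.mem_filter.mpr ⟨Finset.mem_univ _, Finset.mem_singleton_self v⟩) ?_]
  · simp [zsol]
  · intro J hJ hne
    rw [Finset.mem_filter] at hJ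
    simp only [zsol]
    split
    · next h =>
      obtain ⟨w, rfl⟩ := Finset.card_eq_one.mp h
      rw [Finset.mem_singleton] at hJ
      exact absurd (by rw [hJ.2]) hne
    · rfl

lemma zsol_sum_univ : ∑ I : Finset (Fin N), zsol N I = N := by
  simp only [zsol]
  rw [Finset.sum_boole]
  congr 1
  have himg : Finset.univ.filter (fun I : Finset (Fin N) => I.card = 1)
      = Finset.univ.image (fun v : Fin N => ({v} : Finset (Fin N))) := by
    ext I
    simp [Finset.card_eq_one, eq_comm]
  rw [himg, Finset.card_image_of_injective _ Finset.singleton_injective, Finset.card_univ,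
    Fintype.card_fin]

lemma zsol_total : ∑ I ∈ Finset.univ.filter (fun I : Finset (Fin N) => I ≠ ∅), zsol N I
    = N := by
  rw [← zsol_sum_univ (N := N)]
  apply Finset.sum_subset (Finset.filter_subset _ _)
  intro I _ hI
  simp only [Finset.mem_filter, Finset.mem_univ, true_and, not_not] at hI
  subst hI
  simp [zsol]

lemma frac_bddBelow (G : SimpleGraph (Fin N)) :
    BddBelow { c : ℝ | ∃ x : Finset (Fin N) → ℝ,
      (∀ I, 0 ≤ x I ∧ x I ≤ 1) ∧
      (∀ I, ¬ IsIndep G I → x I = 0) ∧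
      (∀ v : Fin N, 1 ≤ ∑ I ∈ Finset.univ.filter (fun I : Finset (Fin N) => v ∈ I), x I) ∧
      c = ∑ I : Finset (Fin N), x I } := by
  refine ⟨0, fun c hc => ?_⟩
  obtain ⟨x, h1, _, _, h4⟩ := hc
  rw [h4]
  exact Finset.sum_nonneg fun I _ => (h1 I).1

lemma frac_attained (G : SimpleGraph (Fin N)) :
    ∃ x : Finset (Fin N) → ℝ,
      (∀ I, 0 ≤ x I ∧ x I ≤ 1) ∧
      (∀ I, ¬ IsIndep G I → x I = 0) ∧
      (∀ v : Fin N, 1 ≤ ∑ I ∈ Finset.univ.filter (fun I : Finset (Fin N) => v ∈ I), x I) ∧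
      ∑ I : Finset (Fin N), x I = fracChrom N G := by
  set Sfeas : Set ((Finset (Fin N)) → ℝ) := {x | (∀ I, 0 ≤ x I ∧ x I ≤ 1) ∧
    (∀ I, ¬ IsIndep G I → x I = 0) ∧
    ∀ v : Fin N, 1 ≤ ∑ I ∈ Finset.univ.filter (fun I : Finset (Fin N) => v ∈ I), x I}
    with hSfeas
  have hzmem : zsol N ∈ Sfeas := by
    refine ⟨fun I => ⟨zsol_nonneg I, zsol_le_one I⟩, fun I h => zsol_indep I h, fun v => ?_⟩
    rw [zsol_cover v]
  have hne : Sfeas.Nonempty := ⟨zsol N, hzmem⟩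
  have h1 : IsClosed {x : (Finset (Fin N)) → ℝ | ∀ I, 0 ≤ x I ∧ x I ≤ 1} := by
    rw [Set.setOf_forall]
    exact isClosed_iInter fun I => IsClosed.inter
      (isClosed_le continuous_const (continuous_apply I))
      (isClosed_le (continuous_apply I) continuous_const)
  have h2 : IsClosed {x : (Finset (Fin N)) → ℝ | ∀ I, ¬ IsIndep G I → x I = 0} := by
    rw [Set.setOf_forall]
    refine isClosed_iInter fun I => ?_
    by_cases h : IsIndep G I
    · have he : {x : (Finset (Fin N)) → ℝ | ¬ IsIndep G I → x I = 0} = Set.univ := by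
        ext x; simp [h]
      rw [he]; exact isClosed_univ
    · have he : {x : (Finset (Fin N)) → ℝ | ¬ IsIndep G I → x I = 0}
          = {x : (Finset (Fin N)) → ℝ | x I = 0} := by
        ext x; simp [h]
      rw [he]; exact isClosed_eq (continuous_apply I) continuous_const
  have h3 : IsClosed {x : (Finset (Fin N)) → ℝ |
      ∀ v : Fin N, 1 ≤ ∑ I ∈ Finset.univ.filter (fun I : Finset (Fin N) => v ∈ I), x I} := by
    rw [Set.setOf_forall]
    exact isClosed_iInter fun v => isClosed_le continuous_const
      (continuous_finset_sum _ fun I _ => continuous_apply I)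
  have hclosed : IsClosed Sfeas := h1.inter (h2.inter h3)
  have hsub : Sfeas ⊆ Set.Icc 0 1 := fun x hx => ⟨fun I => (hx.1 I).1, fun I => (hx.1 I).2⟩
  have hcpt : IsCompact Sfeas := IsCompact.of_isClosed_subset isCompact_Icc hclosed hsub
  have himg : IsCompact ((fun x : (Finset (Fin N)) → ℝ => ∑ I : Finset (Fin N), x I) '' Sfeas) :=
    hcpt.image (continuous_finset_sum _ fun I _ => continuous_apply I)
  have hsetEq : { c : ℝ | ∃ x : Finset (Fin N) → ℝ,
      (∀ I, 0 ≤ x I ∧ x I ≤ 1) ∧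
      (∀ I, ¬ IsIndep G I → x I = 0) ∧
      (∀ v : Fin N, 1 ≤ ∑ I ∈ Finset.univ.filter (fun I : Finset (Fin N) => v ∈ I), x I) ∧
      c = ∑ I : Finset (Fin N), x I }
      = (fun x : (Finset (Fin N)) → ℝ => ∑ I : Finset (Fin N), x I) '' Sfeas := by
    ext c
    constructor
    · rintro ⟨x, ha, hb, hc, hd⟩
      exact ⟨x, ⟨ha, hb, hc⟩, hd.symm⟩
    · rintro ⟨x, hx, hc⟩
      exact ⟨x, hx.1, hx.2.1, hx.2.2, hc.symm⟩
  have hmem := himg.sInf_mem (hne.image _)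
  rw [fracChrom, hsetEq]
  obtain ⟨x, hx, hxsum⟩ := hmem
  exact ⟨x, hx.1, hx.2.1, hx.2.2, hxsum⟩
end Aux4

section Aux5
variable {N : ℕ}

lemma filter_inter_univ :
    Finset.univ.filter (fun I : Finset (Fin N) => (I ∩ Finset.univ).Nonempty)
      = Finset.univ.filter (fun I : Finset (Fin N) => I ≠ ∅) := by
  ext I
  simp [Finset.nonempty_iff_ne_empty]

lemma filter_pair_union (i j : Fin N) :
    Finset.univ.filter (fun I : Finset (Fin N) => (I ∩ {i, j}).Nonempty)
      = Finset.univ.filter (fun I : Finset (Fin N) => i ∈ I)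
        ∪ Finset.univ.filter (fun I : Finset (Fin N) => j ∈ I) := by
  ext I
  simp only [Finset.mem_filter, Finset.mem_univ, true_and, Finset.Nonempty,
    Finset.mem_inter, Finset.mem_union, Finset.mem_insert, Finset.mem_singleton]
  constructor
  · rintro ⟨x, hxI, rfl | rfl⟩
    · exact Or.inl hxI
    · exact Or.inr hxI
  · rintro (h | h)
    · exact ⟨i, h, Or.inl rfl⟩
    · exact ⟨j, h, Or.inr rfl⟩

end Aux5

set_option maxHeartbeats 2000000 in
theorem stmt_6 (N : ℕ) (G : SimpleGraph (Fin N)) (k : ℚ)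
    (hk1 : 1 ≤ k) (hk2 : (k : ℝ) ≤ N) (hχ : fracChrom N G ≤ (N : ℝ)) :
    (∃ f : Finset (Fin N) → ℝ, IsCoverage N f ∧
        (∀ v : Fin N, f {v} = 1) ∧
        (∀ i j : Fin N, G.Adj i j → f {i, j} = 2) ∧
        f Finset.univ = (k : ℝ)) ↔
      fracChrom N G ≤ (k : ℝ) := by
  constructor
  · rintro ⟨f, ⟨kk, wt, A, hwt, hf⟩, hsing, hedge, huniv⟩
    set fib : Fin kk → Finset (Fin N) := fun u => Finset.univ.filter (fun t => u ∈ A t) with hfib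
    set x : Finset (Fin N) → ℝ :=
      fun I => ∑ u ∈ Finset.univ.filter (fun u => fib u = I), wt u with hx
    have hx0 : ∀ I, 0 ≤ x I := fun I => Finset.sum_nonneg fun u _ => hwt u
    have hfx : ∀ T : Finset (Fin N), f T
        = ∑ I ∈ Finset.univ.filter (fun I : Finset (Fin N) => (I ∩ T).Nonempty), x I := by
      intro T
      have h1 := Finset.sum_fiberwise_eq_sum_filter Finset.univ
        (Finset.univ.filter (fun I : Finset (Fin N) => (I ∩ T).Nonempty)) fib wt
      have h2 : T.biUnion A = Finset.univ.filter
          (fun u => fib u ∈ Finset.univ.filter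
            (fun I : Finset (Fin N) => (I ∩ T).Nonempty)) := by
        ext u
        simp only [Finset.mem_biUnion, Finset.mem_filter, Finset.mem_univ, true_and, hfib,
          Finset.Nonempty, Finset.mem_inter]
        tauto
      rw [hf T, h2, ← h1]
    have hSv : ∀ v : Fin N,
        ∑ I ∈ Finset.univ.filter (fun I : Finset (Fin N) => v ∈ I), x I = 1 := by
      intro v
      have h := hfx {v}
      rw [filter_inter_singleton v] at h
      rw [← h]
      exact hsing v
    have hpair0 : ∀ i j : Fin N, G.Adj i j →
        ∑ I ∈ (Finset.univ.filter (fun I : Finset (Fin N) => i ∈ I)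
          ∩ Finset.univ.filter (fun I : Finset (Fin N) => j ∈ I)), x I = 0 := by
      intro i j hij
      have hu := Finset.sum_union_inter
        (s₁ := Finset.univ.filter (fun I : Finset (Fin N) => i ∈ I))
        (s₂ := Finset.univ.filter (fun I : Finset (Fin N) => j ∈ I)) (f := x)
      have h2 := hfx {i, j}
      rw [filter_pair_union i j, hedge i j hij] at h2
      have hsi := hSv i
      have hsj := hSv j
      linarith
    have hindep : ∀ I, ¬ IsIndep G I → x I = 0 := by
      intro I hI
      rw [IsIndep] at hI
      push_neg at hI
      obtain ⟨i, hiI, j, hjI, hij⟩ := hI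
      have hmem : I ∈ Finset.univ.filter (fun I : Finset (Fin N) => i ∈ I)
          ∩ Finset.univ.filter (fun I : Finset (Fin N) => j ∈ I) := by
        simp [Finset.mem_inter, Finset.mem_filter, hiI, hjI]
      have hle : x I ≤ ∑ J ∈ (Finset.univ.filter (fun I : Finset (Fin N) => i ∈ I)
          ∩ Finset.univ.filter (fun I : Finset (Fin N) => j ∈ I)), x J :=
        Finset.single_le_sum (fun J _ => hx0 J) hmem
      have h0 := hpair0 i j hij
      exact le_antisymm (by linarith) (hx0 I)
    set x' : Finset (Fin N) → ℝ := fun I => if I = (∅ : Finset (Fin N)) then 0 else x I with hx'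
    refine csInf_le (frac_bddBelow G) ⟨x', ?_, ?_, ?_, ?_⟩
    · intro I
      constructor
      · simp only [hx']
        split
        · exact le_refl (0:ℝ)
        · exact hx0 I
      · simp only [hx']
        split
        · norm_num
        · next h =>
          obtain ⟨v, hv⟩ := Finset.nonempty_iff_ne_empty.mpr h
          calc x I ≤ ∑ J ∈ Finset.univ.filter (fun J : Finset (Fin N) => v ∈ J), x J :=
                Finset.single_le_sum (fun J _ => hx0 J)
                  (Finset.mem_filter.mpr ⟨Finset.mem_univ _, hv⟩)
            _ = 1 := hSv v
    · intro I hI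
      simp only [hx']
      split
      · rfl
      · exact hindep I hI
    · intro v
      have he : ∑ I ∈ Finset.univ.filter (fun I : Finset (Fin N) => v ∈ I), x' I
          = ∑ I ∈ Finset.univ.filter (fun I : Finset (Fin N) => v ∈ I), x I := by
        apply Finset.sum_congr rfl
        intro I hIf
        rw [Finset.mem_filter] at hIf
        simp only [hx']
        rw [if_neg (Finset.ne_empty_of_mem hIf.2)]
      rw [he, hSv v]
    · have h1 : ∑ I : Finset (Fin N), x' I
          = ∑ I ∈ Finset.univ.filter (fun I : Finset (Fin N) => I ≠ ∅), x' I := by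
        refine (Finset.sum_subset (Finset.filter_subset _ _) ?_).symm
        intro I _ hI
        simp only [Finset.mem_filter, Finset.mem_univ, true_and, not_not] at hI
        simp only [hx']
        rw [if_pos hI]
      have h2 : ∑ I ∈ Finset.univ.filter (fun I : Finset (Fin N) => I ≠ ∅), x' I
          = ∑ I ∈ Finset.univ.filter (fun I : Finset (Fin N) => I ≠ ∅), x I := by
        apply Finset.sum_congr rfl
        intro I hIf
        rw [Finset.mem_filter] at hIf
        simp only [hx']
        rw [if_neg hIf.2]
      have h3 := hfx Finset.univ
      rw [filter_inter_univ] at h3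
      rw [h1, h2, ← h3, huniv]
  · intro hk
    obtain ⟨x, hxb, hxI, hx1, hxs⟩ := frac_attained G
    obtain ⟨y, hy0, hyI, hy1, hyEq, hyT⟩ :=
      equalize G Finset.univ x (fun I => (hxb I).1) hxI hx1
    set t := ∑ I ∈ Finset.univ.filter (fun I : Finset (Fin N) => I ≠ ∅), y I with ht
    have ht_le : t ≤ (k : ℝ) := by
      have h1 : ∑ I ∈ Finset.univ.filter (fun I : Finset (Fin N) => I ≠ ∅), x I
          ≤ ∑ I : Finset (Fin N), x I :=
        Finset.sum_le_sum_of_subset_of_nonneg (Finset.filter_subset _ _)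
          (fun I _ _ => (hxb I).1)
      calc t ≤ ∑ I ∈ Finset.univ.filter (fun I : Finset (Fin N) => I ≠ ∅), x I := hyT
        _ ≤ ∑ I : Finset (Fin N), x I := h1
        _ = fracChrom N G := hxs
        _ ≤ (k : ℝ) := hk
    by_cases hts : t = (N : ℝ)
    · have hkt : (k : ℝ) = t := le_antisymm (hts ▸ hk2) ht_le
      refine ⟨fOf y, isCoverage_fOf y hy0, ?_, ?_, ?_⟩
      · intro v
        rw [fOf_singleton]
        exact hyEq v (Finset.mem_univ v)
      · intro i j hij
        rw [fOf_pair y hyI hij, hyEq i (Finset.mem_univ i), hyEq j (Finset.mem_univ j)]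
        norm_num
      · rw [fOf_univ, hkt]
    · have htlt : t < (N : ℝ) := lt_of_le_of_ne (ht_le.trans hk2) hts
      set lam : ℝ := ((N : ℝ) - k) / ((N : ℝ) - t) with hlam
      have hden : (0 : ℝ) < (N : ℝ) - t := by linarith
      have hlam0 : 0 ≤ lam := div_nonneg (by linarith) hden.le
      have hlam1 : lam ≤ 1 := by
        rw [hlam, div_le_one hden]
        linarith
      set w : Finset (Fin N) → ℝ := fun I => lam * y I + (1 - lam) * zsol N I with hw
      have hw0 : ∀ I, 0 ≤ w I := fun I =>
        add_nonneg (mul_nonneg hlam0 (hy0 I)) (mul_nonneg (by linarith) (zsol_nonneg I))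
      have hwI : ∀ I, ¬ IsIndep G I → w I = 0 := by
        intro I hI
        simp only [hw]
        rw [hyI I hI, zsol_indep I hI]
        ring
      have hwEq : ∀ v : Fin N,
          ∑ I ∈ Finset.univ.filter (fun I : Finset (Fin N) => v ∈ I), w I = 1 := by
        intro v
        simp only [hw]
        rw [Finset.sum_add_distrib, ← Finset.mul_sum, ← Finset.mul_sum,
          hyEq v (Finset.mem_univ v), zsol_cover v]
        ring
      have hwT : ∑ I ∈ Finset.univ.filter (fun I : Finset (Fin N) => I ≠ ∅), w I = (k : ℝ) := by
        simp only [hw]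
        rw [Finset.sum_add_distrib, ← Finset.mul_sum, ← Finset.mul_sum, zsol_total, ← ht]
        have hmul : lam * ((N : ℝ) - t) = (N : ℝ) - k := by
          rw [hlam]
          exact div_mul_cancel₀ _ (ne_of_gt hden)
        linear_combination -hmul
      refine ⟨fOf w, isCoverage_fOf w hw0, ?_, ?_, ?_⟩
      · intro v
        rw [fOf_singleton]
        exact hwEq v
      · intro i j hij
        rw [fOf_pair w hwI hij, hwEq i, hwEq j]
        norm_num
      · rw [fOf_univ]
        exact hwT
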